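/- Let B ⊂ ℝ be an open interval, f a real polynomial of degree at most k, and ε > 0. Then the Lebesgue measure of {x ∈ B : |f(x)| < ε} is at most 2k(k+1)^{1/k} · (ε / sup_{x∈B}|f(x)|)^{1/k} · |B|. -/

import Mathlib

open MeasureTheory

/-- Existence of well-separated points in the closure of a set of positive measure contained
in `Ioo a b`. -/
lemma exists_nodes (k : ℕ) (E : Set ℝ) (hmeas : MeasurableSet E) (a b : ℝ)
    (hE : E ⊆ Set.Ioo a b) (hab : a < b) (hδ : 0 < (volume E).toReal) :
    ∃ t : ℕ → ℝ, (∀ i, i ≤ k → t i ∈ closure E ∩ Set.Icc a b) ∧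
      ∀ i j, i < j → j ≤ k →
        (volume E).toReal / (k + 1) ≤ t j - t i := by
  set δ := (volume E).toReal with hδdef
  have hfinE : volume E ≠ ⊤ := by
    refine ((measure_mono hE).trans_lt ?_).ne
    rw [Real.volume_Ioo]; exact ENNReal.ofReal_lt_top
  have hfin : ∀ s : Set ℝ, volume (E ∩ s) ≠ ⊤ := fun s =>
    ((measure_mono Set.inter_subset_left).trans_lt hfinE.lt_top).ne
  set g : ℝ → ℝ := fun u => (volume (E ∩ Set.Iic u)).toReal with hgdef
  have gmono : Monotone g := by
    intro x y hxy
    exact ENNReal.toReal_mono (hfin _)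
      (measure_mono (Set.inter_subset_inter_right _ (Set.Iic_subset_Iic.2 hxy)))
  have glip : ∀ x y : ℝ, x ≤ y → g y ≤ g x + (y - x) := by
    intro x y hxy
    have hsub : E ∩ Set.Iic y ⊆ (E ∩ Set.Iic x) ∪ Set.Ioc x y := by
      rintro z ⟨hzE, hzy⟩
      rcases le_or_gt z x with h | h
      · exact Or.inl ⟨hzE, h⟩
      · exact Or.inr ⟨h, hzy⟩
    have h1 : volume (E ∩ Set.Iic y) ≤ volume (E ∩ Set.Iic x) + volume (Set.Ioc x y) :=
      (measure_mono hsub).trans (measure_union_le _ _)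
    have h2 := ENNReal.toReal_mono ?_ h1
    · rw [ENNReal.toReal_add (hfin _) (by rw [Real.volume_Ioc]; exact ENNReal.ofReal_ne_top),
        Real.volume_Ioc, ENNReal.toReal_ofReal (by linarith)] at h2
      exact h2
    · rw [Real.volume_Ioc]
      exact ENNReal.add_ne_top.2 ⟨hfin _, ENNReal.ofReal_ne_top⟩
  have gcont : Continuous g := by
    have : LipschitzWith 1 g := by
      refine LipschitzWith.of_dist_le_mul fun x y => ?_
      rw [NNReal.coe_one, one_mul, Real.dist_eq, Real.dist_eq, abs_sub_le_iff]
      rcases le_total x y with h | h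
      · constructor
        · have := gmono h; have := abs_nonneg (x - y); linarith [le_abs_self (x - y),
            neg_abs_le (x - y)]
        · have := glip x y h
          have : g y - g x ≤ y - x := by linarith
          linarith [neg_abs_le (x - y)]
      · constructor
        · have := glip y x h
          have : g x - g y ≤ x - y := by linarith
          linarith [le_abs_self (x - y)]
        · have := gmono h
          linarith [abs_nonneg (x - y)]
    exact this.continuous
  have ga : g a = 0 := by
    have : E ∩ Set.Iic a = ∅ := by
      ext z; simp only [Set.mem_inter_iff, Set.mem_Iic, Set.mem_empty_iff_false, iff_false]
      rintro ⟨hz, hza⟩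
      exact absurd (hE hz).1 (not_lt.2 hza)
    simp [hgdef, this]
  have gb : g b = δ := by
    have : E ∩ Set.Iic b = E := Set.inter_eq_left.2 fun z hz => (hE hz).2.le
    simp [hgdef, this, hδdef]
  have hivt : Set.Icc 0 δ ⊆ g '' Set.Icc a b := by
    have := intermediate_value_Icc hab.le gcont.continuousOn
    rwa [ga, gb] at this
  -- the level sets
  set c : ℕ → ℝ := fun i => (i : ℝ) * δ / (k + 1) with hcdef
  have hck : ∀ i : ℕ, i ≤ k → c i < δ := by
    intro i hi
    have h1 : (i : ℝ) < (k : ℝ) + 1 := by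
      exact_mod_cast Nat.lt_succ_of_le hi
    rw [hcdef]
    rw [div_lt_iff₀ (by positivity)]
    nlinarith
  have hc0 : ∀ i : ℕ, 0 ≤ c i := fun i => by positivity
  set S : ℕ → Set ℝ := fun i => Set.Icc a b ∩ g ⁻¹' {c i} with hSdef
  have hScompact : ∀ i, IsCompact (S i) :=
    fun i => (isCompact_Icc).of_isClosed_subset
      (isClosed_Icc.inter (isClosed_singleton.preimage gcont)) Set.inter_subset_left
  have hSne : ∀ i : ℕ, i ≤ k → (S i).Nonempty := by
    intro i hi
    have hm := hivt ⟨hc0 i, (hck i hi).le⟩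
    rw [Set.mem_image] at hm
    obtain ⟨x, hx, hgx⟩ := hm
    refine ⟨x, ?_⟩
    rw [hSdef]
    exact ⟨hx, hgx⟩
  set t : ℕ → ℝ := fun i => sSup (S i) with htdef
  have htmem : ∀ i : ℕ, i ≤ k → t i ∈ S i := fun i hi =>
    (hScompact i).sSup_mem (hSne i hi)
  have htg : ∀ i : ℕ, i ≤ k → g (t i) = c i := fun i hi => (htmem i hi).2
  have htIcc : ∀ i : ℕ, i ≤ k → t i ∈ Set.Icc a b := fun i hi => (htmem i hi).1
  have hsep : ∀ i j : ℕ, i < j → j ≤ k → δ / (k + 1) ≤ t j - t i := by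
    intro i j hij hjk
    have hik : i ≤ k := (le_of_lt hij).trans hjk
    have hcij : c i + δ / (k + 1) ≤ c j := by
      have h1 : (i : ℝ) + 1 ≤ (j : ℝ) := by exact_mod_cast hij
      rw [hcdef]
      simp only
      rw [← add_div]
      gcongr
      nlinarith
    have htij : t i ≤ t j := by
      by_contra h
      push_neg at h
      have := gmono h.le
      rw [htg i hik, htg j hjk] at this
      have hd : 0 < δ / (k + 1) := by positivity
      linarith
    have := glip (t i) (t j) htij
    rw [htg i hik, htg j hjk] at this
    linarith
  have hclosure : ∀ i : ℕ, i ≤ k → t i ∈ closure E := by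
    intro i hi
    rw [Metric.mem_closure_iff]
    intro η hη
    set u := t i + η / 2 with hudef
    have htu : t i < u := by rw [hudef]; linarith
    have hgu : c i ≤ g u := by
      rw [← htg i hi]; exact gmono htu.le
    rcases eq_or_lt_of_le hgu with heq | hlt
    · exfalso
      rcases le_or_gt u b with hub | hub
      · have hu : u ∈ S i := ⟨⟨(htIcc i hi).1.trans htu.le, hub⟩, heq.symm⟩
        have : u ≤ t i := le_csSup (hScompact i).bddAbove hu
        linarith
      · have : g b ≤ g u := gmono hub.le
        rw [gb, ← heq] at this
        exact absurd this (not_le.2 (hck i hi))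
    · -- positive measure in (t i, u]
      have hsplit : volume (E ∩ Set.Iic u) =
          volume (E ∩ Set.Iic (t i)) + volume (E ∩ Set.Ioc (t i) u) := by
        rw [← measure_union ?_ (hmeas.inter measurableSet_Ioc)]
        · congr 1
          rw [← Set.inter_union_distrib_left]
          congr 1
          rw [Set.Iic_union_Ioc_eq_Iic htu.le]
        · apply Set.disjoint_left.2
          rintro z ⟨_, hz1⟩ ⟨_, hz2⟩
          exact absurd hz2.1 (not_lt.2 hz1)
      have hne : volume (E ∩ Set.Ioc (t i) u) ≠ 0 := by
        intro h0
        rw [h0, add_zero] at hsplit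
        have : g u = g (t i) := by rw [hgdef]; simp only; rw [hsplit]
        rw [htg i hi] at this
        linarith
      obtain ⟨y, hyE, hy1, hy2⟩ := nonempty_of_measure_ne_zero hne
      refine ⟨y, hyE, ?_⟩
      rw [Real.dist_eq, abs_of_nonpos (by linarith)]
      rw [hudef] at hy2
      linarith
  exact ⟨t, fun i hi => ⟨hclosure i hi, htIcc i hi⟩, hsep⟩

/-- Lagrange interpolation bound: if `p` has degree ≤ k and is at most `ε` in absolute value at
`k+1` points of `[a,b]` which are `d`-separated, then on `(a,b)` it is at most
`(k+1) ε ((b-a)/d)^k`. -/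
lemma eval_bound (k : ℕ) (p : Polynomial ℝ) (hdeg : p.natDegree ≤ k)
    (a b ε : ℝ) (t : ℕ → ℝ) (d : ℝ) (hd : 0 < d)
    (hta : ∀ i, i ≤ k → t i ∈ Set.Icc a b) (htε : ∀ i, i ≤ k → |p.eval (t i)| ≤ ε)
    (hsep : ∀ i j, i < j → j ≤ k → d ≤ t j - t i) :
    ∀ x ∈ Set.Ioo a b, |p.eval x| ≤ ((k : ℝ) + 1) * ε * ((b - a) / d) ^ k := by
  intro x hx
  have hab : a < b := hx.1.trans hx.2
  have hε : 0 ≤ ε := (abs_nonneg _).trans (htε 0 (Nat.zero_le _))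
  set s : Finset ℕ := Finset.range (k + 1) with hsdef
  have hmem : ∀ i : ℕ, i ∈ s → i ≤ k := fun i hi => Nat.lt_succ_iff.1 (Finset.mem_range.1 hi)
  have habs_sep : ∀ i j : ℕ, i ≤ k → j ≤ k → i ≠ j → d ≤ |t i - t j| := by
    intro i j hik hjk hij
    rcases lt_or_gt_of_ne hij with h | h
    · rw [abs_of_nonpos (by linarith [hsep i j h hjk, hd])]
      linarith [hsep i j h hjk]
    · rw [abs_of_nonneg (by linarith [hsep j i h hik, hd])]
      linarith [hsep j i h hik]
  have hinj : Set.InjOn t s := by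
    intro i hi j hj hij
    by_contra h
    have := habs_sep i j (hmem i hi) (hmem j hj) h
    rw [hij, sub_self, abs_zero] at this
    linarith
  have hdeglt : p.degree < (s.card : ℕ) := by
    rw [hsdef, Finset.card_range]
    calc p.degree ≤ (p.natDegree : WithBot ℕ) := Polynomial.degree_le_natDegree
      _ < ((k + 1 : ℕ) : WithBot ℕ) := by
          exact_mod_cast Nat.lt_succ_of_le hdeg
  have hpi := Lagrange.eq_interpolate hinj hdeglt
  have heval : p.eval x = ∑ i ∈ s, p.eval (t i) * (Lagrange.basis s t i).eval x := by
    conv_lhs => rw [hpi]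
    rw [Lagrange.interpolate_apply, Polynomial.eval_finset_sum]
    simp [Polynomial.eval_mul]
  rw [heval]
  calc |∑ i ∈ s, p.eval (t i) * (Lagrange.basis s t i).eval x|
      ≤ ∑ i ∈ s, |p.eval (t i) * (Lagrange.basis s t i).eval x| :=
        Finset.abs_sum_le_sum_abs _ _
    _ ≤ ∑ i ∈ s, ε * ((b - a) / d) ^ k := by
        refine Finset.sum_le_sum fun i hi => ?_
        rw [abs_mul]
        have hik := hmem i hi
        refine mul_le_mul (htε i hik) ?_ (abs_nonneg _) hε
        -- bound on basis polynomial
        rw [Lagrange.basis, Polynomial.eval_prod, Finset.abs_prod]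
        have hcard : (s.erase i).card = k := by
          rw [Finset.card_erase_of_mem hi, hsdef, Finset.card_range]
          omega
        calc ∏ j ∈ s.erase i, |(Lagrange.basisDivisor (t i) (t j)).eval x|
            ≤ ∏ j ∈ s.erase i, ((b - a) / d) := by
              refine Finset.prod_le_prod (fun j _ => abs_nonneg _) fun j hj => ?_
              have hjs := Finset.mem_of_mem_erase hj
              have hjk := hmem j hjs
              have hji : j ≠ i := Finset.ne_of_mem_erase hj
              have hsepij := habs_sep i j hik hjk (Ne.symm hji)
              rw [Lagrange.basisDivisor]
              rw [Polynomial.eval_mul, Polynomial.eval_C, Polynomial.eval_sub,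
                Polynomial.eval_X, Polynomial.eval_C, abs_mul, abs_inv]
              have hxj : |x - t j| ≤ b - a := by
                have h1 := (hta j hjk).1
                have h2 := (hta j hjk).2
                rw [abs_le]
                constructor <;> [linarith [hx.1]; linarith [hx.2]]
              have hpos : 0 < |t i - t j| := lt_of_lt_of_le hd hsepij
              rw [div_eq_inv_mul]
              exact mul_le_mul (inv_anti₀ hd hsepij) hxj (abs_nonneg _)
                (by positivity)
            _ = ((b - a) / d) ^ k := by rw [Finset.prod_const, hcard]
    _ = ((k : ℝ) + 1) * ε * ((b - a) / d) ^ k := by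
        rw [Finset.sum_const, hsdef, Finset.card_range, nsmul_eq_mul]
        push_cast
        ring

/-- Let B ⊂ ℝ be an open interval, f a real polynomial of degree at most k,
and ε > 0. Then |{x ∈ B : |f(x)| < ε}| ≤ 2k(k+1)^{1/k} · (ε / sup_{x∈B}|f(x)|)^{1/k} · |B|.
The quotient is taken in `ℝ≥0∞`, so that ε/0 = ∞ and the bound holds trivially when f ≡ 0 on B. -/
theorem stmt0 (k : ℕ) (hk : 0 < k) (p : Polynomial ℝ) (hdeg : p.natDegree ≤ k)
    (a b : ℝ) (ε : ℝ) (hε : 0 < ε) :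
    volume {x ∈ Set.Ioo a b | |p.eval x| < ε} ≤
      ENNReal.ofReal (2 * k * ((k : ℝ) + 1) ^ ((1 : ℝ) / k)) *
        (ENNReal.ofReal ε / ENNReal.ofReal (⨆ x ∈ Set.Ioo a b, |p.eval x|)) ^ ((1 : ℝ) / k) *
        volume (Set.Ioo a b) := by
  set E : Set ℝ := {x ∈ Set.Ioo a b | |p.eval x| < ε} with hEdef
  set M : ℝ := ⨆ x ∈ Set.Ioo a b, |p.eval x| with hMdef
  have hpc : Continuous fun x : ℝ => |p.eval x| := p.continuous.abs
  have hEopen : IsOpen E := by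
    have : E = Set.Ioo a b ∩ (fun x : ℝ => |p.eval x|) ⁻¹' Set.Iio ε := by
      ext z; simp [hEdef, Set.mem_setOf_eq, and_comm]
    rw [this]
    exact isOpen_Ioo.inter (isOpen_Iio.preimage hpc)
  have hmeas : MeasurableSet E := hEopen.measurableSet
  have hEsub : E ⊆ Set.Ioo a b := fun x hx => hx.1
  by_cases hE0 : volume E = 0
  · rw [hE0]; exact zero_le
  -- E nonempty, so a < b
  obtain ⟨x₀, hx₀⟩ := nonempty_of_measure_ne_zero hE0
  have hab : a < b := (hx₀.1.1).trans hx₀.1.2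
  have hfinE : volume E ≠ ⊤ := by
    refine ((measure_mono hEsub).trans_lt ?_).ne
    rw [Real.volume_Ioo]; exact ENNReal.ofReal_lt_top
  set δ : ℝ := (volume E).toReal with hδdef
  have hδpos : 0 < δ := ENNReal.toReal_pos hE0 hfinE
  obtain ⟨t, htmem, hsep⟩ := exists_nodes k E hmeas a b hEsub hab hδpos
  set d : ℝ := δ / (k + 1) with hddef
  have hd : 0 < d := by positivity
  have htIcc : ∀ i, i ≤ k → t i ∈ Set.Icc a b := fun i hi => (htmem i hi).2
  have htε : ∀ i, i ≤ k → |p.eval (t i)| ≤ ε := by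
    intro i hi
    have hcl : closure E ⊆ {x : ℝ | |p.eval x| ≤ ε} := by
      apply closure_minimal
      · exact fun x hx => hx.2.le
      · exact isClosed_le hpc continuous_const
    exact hcl (htmem i hi).1
  have hbound := eval_bound k p hdeg a b ε t d hd htIcc htε hsep
  have hRHS0 : 0 ≤ ((k : ℝ) + 1) * ε * ((b - a) / d) ^ k :=
    mul_nonneg (mul_nonneg (by positivity) hε.le)
      (pow_nonneg (div_nonneg (sub_nonneg.2 hab.le) hd.le) k)
  have hM : M ≤ ((k : ℝ) + 1) * ε * ((b - a) / d) ^ k := by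
    rw [hMdef]
    exact Real.iSup_le (fun x => Real.iSup_le (fun hx => hbound x hx) hRHS0) hRHS0
  have hM0 : 0 ≤ M := by
    rw [hMdef]
    exact Real.iSup_nonneg fun x => Real.iSup_nonneg fun _ => abs_nonneg _
  have hCpos : 0 < 2 * (k : ℝ) * ((k : ℝ) + 1) ^ ((1 : ℝ) / k) :=
    mul_pos (by positivity) (Real.rpow_pos_of_pos (by positivity) _)
  rcases eq_or_lt_of_le hM0 with hMz | hMpos
  · -- M = 0 : RHS is ∞
    rw [← hMz, ENNReal.ofReal_zero, ENNReal.div_zero (by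
      simpa [ENNReal.ofReal_eq_zero, not_le] using hε),
      ENNReal.top_rpow_of_pos (by positivity),
      ENNReal.mul_top (by rw [Ne, ENNReal.ofReal_eq_zero, not_le]; exact hCpos),
      ENNReal.top_mul (by
        rw [Real.volume_Ioo]
        simpa [ENNReal.ofReal_eq_zero, not_le] using sub_pos.2 hab)]
    exact le_top
  -- main case : M > 0
  have hkR : (1 : ℝ) ≤ (k : ℝ) := by exact_mod_cast hk
  have hdeltak : δ = ((k : ℝ) + 1) * d := by
    rw [hddef]; field_simp
  have key1 : M * d ^ k ≤ ((k : ℝ) + 1) * ε * (b - a) ^ k := by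
    have hdk : (0 : ℝ) < d ^ k := pow_pos hd k
    rw [div_pow] at hM
    calc M * d ^ k ≤ (((k : ℝ) + 1) * ε * ((b - a) ^ k / d ^ k)) * d ^ k :=
          mul_le_mul_of_nonneg_right hM hdk.le
      _ = ((k : ℝ) + 1) * ε * (b - a) ^ k := by field_simp
  have key2 : M * δ ^ k ≤ ((k : ℝ) + 1) ^ (k + 1) * ε * (b - a) ^ k := by
    rw [hdeltak, mul_pow, pow_succ]
    calc M * (((k : ℝ) + 1) ^ k * d ^ k) = ((k : ℝ) + 1) ^ k * (M * d ^ k) := by ring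
      _ ≤ ((k : ℝ) + 1) ^ k * (((k : ℝ) + 1) * ε * (b - a) ^ k) := by
          exact mul_le_mul_of_nonneg_left key1 (by positivity)
      _ = ((k : ℝ) + 1) ^ k * ((k : ℝ) + 1) * ε * (b - a) ^ k := by ring
  have key3 : M * δ ^ k ≤ (2 * (k : ℝ)) ^ k * ((k : ℝ) + 1) * ε * (b - a) ^ k := by
    refine key2.trans ?_
    have h1 : ((k : ℝ) + 1) ^ k ≤ (2 * (k : ℝ)) ^ k :=
      pow_le_pow_left₀ (by positivity) (by linarith) k
    have h2 : ((k : ℝ) + 1) ^ (k + 1) = ((k : ℝ) + 1) ^ k * ((k : ℝ) + 1) := pow_succ _ _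
    rw [h2]
    have := mul_le_mul_of_nonneg_right h1 (by positivity : (0:ℝ) ≤ ((k : ℝ) + 1))
    nlinarith [mul_nonneg hε.le (pow_nonneg (sub_nonneg.2 hab.le) k),
      mul_le_mul_of_nonneg_right this
        (mul_nonneg hε.le (pow_nonneg (sub_nonneg.2 hab.le) k))]
  have key4 : δ ^ k ≤ (2 * (k : ℝ)) ^ k * ((k : ℝ) + 1) * (ε / M) * (b - a) ^ k := by
    have hMpos' : 0 < M := hMpos
    rw [div_eq_mul_inv]
    rw [show (2 * (k : ℝ)) ^ k * ((k : ℝ) + 1) * (ε * M⁻¹) * (b - a) ^ k =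
      ((2 * (k : ℝ)) ^ k * ((k : ℝ) + 1) * ε * (b - a) ^ k) / M by field_simp]
    rw [le_div_iff₀ hMpos']
    calc δ ^ k * M = M * δ ^ k := by ring
      _ ≤ _ := key3
  have hMpos' : 0 < M := hMpos
  -- take k-th roots
  have hfinal : δ ≤ 2 * (k : ℝ) * ((k : ℝ) + 1) ^ ((1 : ℝ) / k) * (ε / M) ^ ((1 : ℝ) / k)
      * (b - a) := by
    have h1 : δ = (δ ^ k) ^ ((1 : ℝ) / k) := by
      rw [one_div, Real.pow_rpow_inv_natCast hδpos.le hk.ne']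
    rw [h1]
    have h2 : (δ ^ k) ^ ((1 : ℝ) / k) ≤
        ((2 * (k : ℝ)) ^ k * ((k : ℝ) + 1) * (ε / M) * (b - a) ^ k) ^ ((1 : ℝ) / k) :=
      Real.rpow_le_rpow (by positivity) key4 (by positivity)
    refine h2.trans ?_
    rw [Real.mul_rpow (by positivity) (pow_nonneg (sub_nonneg.2 hab.le) k),
      Real.mul_rpow (by positivity) (by positivity),
      Real.mul_rpow (by positivity) (by positivity),
      one_div, Real.pow_rpow_inv_natCast (by positivity) hk.ne',
      Real.pow_rpow_inv_natCast (sub_nonneg.2 hab.le) hk.ne']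
  -- convert to ENNReal
  have hvol : volume E = ENNReal.ofReal δ := (ENNReal.ofReal_toReal hfinE).symm
  rw [hvol, Real.volume_Ioo, ← ENNReal.ofReal_div_of_pos hMpos',
    ENNReal.ofReal_rpow_of_nonneg (by positivity) (by positivity),
    ← ENNReal.ofReal_mul hCpos.le, ← ENNReal.ofReal_mul (by positivity)]
  exact ENNReal.ofReal_le_ofReal hfinal
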